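/- Let R ≥ 2 and let G_R be the restricted wreath product (ℤ/Rℤ) ≀ ℤ. Let k be the largest exponent occurring in the prime factorization of R, i.e. k = Finset.sup R.primeFactors (fun p => R.factorization p). Then for every n ≥ 1, every word w ∈ FreeGroup (Fin n) that is an E-type iterated identity of G_R has iterational depth at most k+1 in G_R: G_R has iterational depth at most k+1 with respect to w. -/

import Mathlib

noncomputable section

/-- The verbal map: evaluate `w` with the variable of index `0` set to `x`
and the variable of index `i` set to `f i` for `i ≠ 0`. -/
def verbalMap {n : ℕ} [NeZero n] {G : Type*} [Group G] (w : FreeGroup (Fin n))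
    (f : Fin n → G) : G → G :=
  fun x => FreeGroup.lift (Function.update f 0 x) w

/-- `w` is an E-type (Engel type) iterated identity of `G`. -/
def IsEIteratedIdentity {n : ℕ} [NeZero n] (w : FreeGroup (Fin n)) (G : Type*) [Group G] : Prop :=
  ∀ f : Fin n → G, ∃ d : ℕ, 1 ≤ d ∧ (verbalMap w f)^[d] (f 0) = 1

/-- `G` has iterational depth at most `D` with respect to `w`. -/
def DepthAtMost {n : ℕ} [NeZero n] (w : FreeGroup (Fin n)) (G : Type*) [Group G] (D : ℕ) : Prop :=
  ∀ f : Fin n → G, ∃ d : ℕ, 1 ≤ d ∧ d ≤ D ∧ (verbalMap w f)^[d] (f 0) = 1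

/-- The shift automorphism action of `ℤ` on finitely supported configurations,
`(k • c) i = c (i - k)`, as a homomorphism into the automorphism group. -/
def wreathShift (R : Type*) [AddCommGroup R] :
    Multiplicative ℤ →* MulAut (Multiplicative (ℤ →₀ R)) where
  toFun k := AddEquiv.toMultiplicative
    (Finsupp.domCongr (Equiv.addRight (Multiplicative.toAdd k)) : (ℤ →₀ R) ≃+ (ℤ →₀ R))
  map_one' := by
    refine MulEquiv.ext fun c => Multiplicative.toAdd.injective (Finsupp.ext fun i => ?_)
    simp [Finsupp.equivMapDomain_apply] <;> rfl
  map_mul' := by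
    intro a b
    refine MulEquiv.ext fun c => Multiplicative.toAdd.injective (Finsupp.ext fun i => ?_)
    simp [Finsupp.equivMapDomain_apply, Equiv.Perm.mul_def, Equiv.symm_trans_apply,
      sub_eq_add_neg, add_comm, add_assoc, add_left_comm]

/-- The restricted wreath product `(ℤ/Rℤ) ≀ ℤ`. -/
abbrev WreathZModZ (R : ℕ) : Type :=
  Multiplicative (ℤ →₀ ZMod R) ⋊[wreathShift (ZMod R)] Multiplicative ℤ

namespace WreathDepthProof

open Finsupp Multiplicative SemidirectProduct

/-! ### Generic free-group lemmas -/

section FreeGroupLemmas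

variable {n : ℕ} [NeZero n]

lemma lift_comp {A B : Type*} [Group A] [Group B] (φ : A →* B) (g : Fin n → A)
    (w : FreeGroup (Fin n)) :
    φ (FreeGroup.lift g w) = FreeGroup.lift (fun i => φ (g i)) w := by
  have h : φ.comp (FreeGroup.lift g) = FreeGroup.lift (fun i => φ (g i)) :=
    FreeGroup.ext_hom _ _ (fun a => by simp)
  exact DFunLike.congr_fun h w

lemma lift_mul_tuple {A : Type*} [CommGroup A] (g h : Fin n → A) (w : FreeGroup (Fin n)) :
    FreeGroup.lift (fun i => g i * h i) w = FreeGroup.lift g w * FreeGroup.lift h w := by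
  induction w using FreeGroup.induction_on with
  | C1 => simp
  | of i =>
      simp only [show (pure i : FreeGroup (Fin n)) = FreeGroup.of i from rfl, FreeGroup.lift_apply_of]
  | inv_of i _ =>
      simp only [map_inv, show (pure i : FreeGroup (Fin n)) = FreeGroup.of i from rfl,
        FreeGroup.lift_apply_of, mul_inv]
  | mul x y ihx ihy => simp only [map_mul, ihx, ihy, mul_mul_mul_comm]

lemma update_decomp {A : Type*} [Group A] (g : Fin n → A) (x : A) :
    Function.update g 0 x = fun i =>
      Function.update g 0 1 i * Function.update (1 : Fin n → A) 0 x i := by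
  funext i
  rcases eq_or_ne i 0 with rfl | h
  · simp
  · simp [Function.update_of_ne h]

end FreeGroupLemmas

/-! ### Part I : all homomorphisms to `ℤ` kill `w` -/

section Star

variable {n : ℕ} [NeZero n] {R : ℕ} {w : FreeGroup (Fin n)}

lemma exists_iter_int (Hw : IsEIteratedIdentity w (WreathZModZ R))
    (g : Fin n → Multiplicative ℤ) : ∃ d, 1 ≤ d ∧
    (fun x => FreeGroup.lift (Function.update g 0 x) w)^[d] (g 0) = 1 := by
  obtain ⟨d, hd1, hd⟩ := Hw (fun i => inr (g i))
  refine ⟨d, hd1, ?_⟩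
  have hsc : Function.Semiconj (⇑(rightHom : WreathZModZ R →* Multiplicative ℤ))
      (verbalMap w (fun i => inr (g i)))
      (fun x => FreeGroup.lift (Function.update g 0 x) w) := by
    intro x
    show rightHom (FreeGroup.lift _ w) = _
    rw [lift_comp]
    have htup : (fun i => rightHom (Function.update (fun j => (inr (g j) : WreathZModZ R)) 0 x i))
        = Function.update g 0 (rightHom x) := by
      funext i
      rcases eq_or_ne i 0 with rfl | h
      · simp
      · simp [Function.update_of_ne h]
    rw [htup]
  have h2 := (hsc.iterate_right d) (inr (g 0))
  have h3 : (fun x => FreeGroup.lift (Function.update g 0 x) w)^[d] (rightHom (inr (g 0) : WreathZModZ R)) = 1 := by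
    rw [← h2, show (inr (g 0) : WreathZModZ R) = (fun i => (inr (g i) : WreathZModZ R)) 0 from rfl,
      hd, map_one]
  rwa [rightHom_inr] at h3

lemma lift_int_eq_one (Hw : IsEIteratedIdentity w (WreathZModZ R)) :
    ∀ g : Fin n → Multiplicative ℤ, FreeGroup.lift g w = 1 := by
  classical
  have hdecomp : ∀ (g : Fin n → Multiplicative ℤ) (x : Multiplicative ℤ),
      FreeGroup.lift (Function.update g 0 x) w =
        FreeGroup.lift (Function.update g 0 1) w *
          FreeGroup.lift (Function.update (1 : Fin n → Multiplicative ℤ) 0 x) w := by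
    intro g x
    conv_lhs => rw [update_decomp g x]
    exact lift_mul_tuple _ _ w
  have h0mul : ∀ x y : Multiplicative ℤ,
      FreeGroup.lift (Function.update (1 : Fin n → Multiplicative ℤ) 0 (x * y)) w =
        FreeGroup.lift (Function.update (1 : Fin n → Multiplicative ℤ) 0 x) w *
          FreeGroup.lift (Function.update (1 : Fin n → Multiplicative ℤ) 0 y) w := by
    intro x y
    have h1 : Function.update (1 : Fin n → Multiplicative ℤ) 0 (x * y)
        = fun i => Function.update (1 : Fin n → Multiplicative ℤ) 0 x i *
            Function.update (1 : Fin n → Multiplicative ℤ) 0 y i := by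
      funext i
      rcases eq_or_ne i 0 with rfl | h
      · simp
      · simp [Function.update_of_ne h]
    rw [h1]; exact lift_mul_tuple _ _ w
  set H : Multiplicative ℤ →* Multiplicative ℤ :=
    MonoidHom.mk' (fun x => FreeGroup.lift (Function.update (1 : Fin n → Multiplicative ℤ) 0 x) w)
      h0mul with hH
  have hHpow : ∀ x : Multiplicative ℤ, H x = (H (ofAdd 1)) ^ (toAdd x) := by
    intro x
    rw [← map_zpow]
    congr 1
    apply Multiplicative.toAdd.injective
    simp
  -- step a : the "exponent of the variable" is zero
  have hH1 : ∀ x, H x = 1 := by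
    obtain ⟨d, hd1, hit⟩ := exists_iter_int Hw (Function.update 1 0 (ofAdd 1))
    rw [show (Function.update (1 : Fin n → Multiplicative ℤ) 0 (ofAdd 1)) 0 = ofAdd (1:ℤ) from
      Function.update_self _ _ _] at hit
    have hfun : (fun x => FreeGroup.lift
        (Function.update (Function.update (1 : Fin n → Multiplicative ℤ) 0 (ofAdd 1)) 0 x) w)
        = fun x => H x := by
      funext x; rw [Function.update_idem]; rfl
    rw [hfun] at hit
    set s : ℤ := toAdd (H (ofAdd 1)) with hs
    have hiter : ∀ m : ℕ, (fun x => H x)^[m] (ofAdd (1:ℤ)) = ofAdd (s ^ m) := by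
      intro m; induction m with
      | zero => simp
      | succ m ih =>
          rw [Function.iterate_succ_apply', ih, hHpow]
          apply Multiplicative.toAdd.injective
          simp [pow_succ, hs, mul_comm]
    rw [hiter d] at hit
    have hsd : s ^ d = 0 := by simpa using congrArg toAdd hit
    have hs0 : s = 0 := pow_eq_zero_iff (by omega : d ≠ 0) |>.mp hsd
    intro x
    rw [hHpow]
    have hone : H (ofAdd 1) = 1 := by
      apply Multiplicative.toAdd.injective
      exact hs0
    rw [hone, one_zpow]
  -- step b : constants vanish
  intro g
  obtain ⟨d, hd1, hitg⟩ := exists_iter_int Hw g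
  have hconst : ∀ x, FreeGroup.lift (Function.update g 0 x) w =
      FreeGroup.lift (Function.update g 0 1) w := by
    intro x
    rw [hdecomp g x, show FreeGroup.lift (Function.update (1 : Fin n → Multiplicative ℤ) 0 x) w
      = H x from rfl, hH1, mul_one]
  have hCiter : ∀ (m : ℕ) (x : Multiplicative ℤ),
      (fun x => FreeGroup.lift (Function.update g 0 x) w)^[m+1] x =
        FreeGroup.lift (Function.update g 0 1) w := by
    intro m
    induction m with
    | zero => intro x; simpa using hconst x
    | succ m ih => intro x; rw [Function.iterate_succ_apply]; exact ih _
  have hC1 : FreeGroup.lift (Function.update g 0 1) w = 1 := by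
    obtain ⟨m, rfl⟩ : ∃ m, d = m + 1 := ⟨d - 1, by omega⟩
    rw [hCiter m (g 0)] at hitg; exact hitg
  have hg : FreeGroup.lift g w = FreeGroup.lift (Function.update g 0 (g 0)) w := by
    rw [Function.update_eq_self]
  rw [hg, hdecomp, hC1, one_mul,
    show FreeGroup.lift (Function.update (1 : Fin n → Multiplicative ℤ) 0 (g 0)) w = H (g 0)
      from rfl, hH1]

end Star

/-! ### Part II : the affine model -/

section Affine

variable {n : ℕ} [NeZero n] {R : ℕ}

/-- Laurent polynomials over `ZMod R`, i.e. the group algebra of `ℤ`. -/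
abbrev LP (R : ℕ) := AddMonoidAlgebra (ZMod R) ℤ

/-- The canonical identification of `LP R` with the base group of the wreath product. -/
def mof {R : ℕ} (x : LP R) : Multiplicative (ℤ →₀ ZMod R) := Multiplicative.ofAdd x.coeff

lemma mof_add (x y : LP R) : mof (x + y) = mof x * mof y := rfl

lemma mof_injective : Function.Injective (mof (R := R)) := fun _ _ h => AddMonoidAlgebra.coeff_injective h

lemma toAdd_mof (x : LP R) : (toAdd (mof x) : ℤ →₀ ZMod R) = x.coeff := rfl

/-- The monomial `T^t`. -/
def TT (R : ℕ) (t : ℤ) : LP R := AddMonoidAlgebra.single t 1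

lemma TT_add (a b : ℤ) : (TT R (a + b)) = TT R a * TT R b := by
  rw [TT, TT, TT, AddMonoidAlgebra.single_mul_single, one_mul]

lemma TT_zero : TT R 0 = 1 := by
  rw [TT, AddMonoidAlgebra.one_def]

/-- The affine model group: triples recording the affine dependence of a word value on a
base-group variable, together with the `ℤ`-component. -/
@[ext]
structure Aff (R : ℕ) where
  cb : LP R
  ck : LP R
  ct : ℤ

namespace Aff

instance : One (Aff R) := ⟨⟨0, 0, 0⟩⟩
instance : Mul (Aff R) :=
  ⟨fun x y => ⟨x.cb + TT R x.ct * y.cb, x.ck + TT R x.ct * y.ck, x.ct + y.ct⟩⟩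
instance : Inv (Aff R) :=
  ⟨fun x => ⟨-(TT R (-x.ct) * x.cb), -(TT R (-x.ct) * x.ck), -x.ct⟩⟩

@[simp] lemma mul_cb (x y : Aff R) : (x * y).cb = x.cb + TT R x.ct * y.cb := rfl
@[simp] lemma mul_ck (x y : Aff R) : (x * y).ck = x.ck + TT R x.ct * y.ck := rfl
@[simp] lemma mul_ct (x y : Aff R) : (x * y).ct = x.ct + y.ct := rfl
@[simp] lemma one_cb : (1 : Aff R).cb = 0 := rfl
@[simp] lemma one_ck : (1 : Aff R).ck = 0 := rfl
@[simp] lemma one_ct : (1 : Aff R).ct = 0 := rfl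
@[simp] lemma inv_cb (x : Aff R) : (x⁻¹).cb = -(TT R (-x.ct) * x.cb) := rfl
@[simp] lemma inv_ck (x : Aff R) : (x⁻¹).ck = -(TT R (-x.ct) * x.ck) := rfl
@[simp] lemma inv_ct (x : Aff R) : (x⁻¹).ct = -x.ct := rfl

instance : Group (Aff R) where
  mul_assoc a b c := by
    ext
    · simp only [mul_cb, mul_ct, TT_add]; ring
    · simp only [mul_ck, mul_ct, TT_add]; ring
    · simp only [mul_ct]; ring
  one_mul a := by ext <;> simp [TT_zero]
  mul_one a := by ext <;> simp
  inv_mul_cancel a := by ext <;> simp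

end Aff

lemma wreathShift_mof (t : ℤ) (y : LP R) :
    wreathShift (ZMod R) (ofAdd t) (mof y) = mof (TT R t * y) := by
  show ofAdd (Finsupp.equivMapDomain (Equiv.addRight t) (toAdd (mof y))) = _
  apply Multiplicative.toAdd.injective
  show Finsupp.equivMapDomain (Equiv.addRight t) (toAdd (mof y)) = toAdd (mof (TT R t * y))
  ext j
  rw [Finsupp.equivMapDomain_apply]
  show y.coeff _ = (AddMonoidAlgebra.single t (1 : ZMod R) * y).coeff j
  rw [AddMonoidAlgebra.coeff_single_mul_apply, one_mul]
  congr 1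
  simp [sub_eq_neg_add, add_comm]

/-- Evaluation of the affine model at a point `a` of the base group. -/
def ev (R : ℕ) (a : LP R) : Aff R →* WreathZModZ R where
  toFun g := ⟨mof (g.cb + g.ck * a), ofAdd g.ct⟩
  map_one' := by
    refine SemidirectProduct.ext ?_ ?_
    · show mof ((1 : Aff R).cb + (1 : Aff R).ck * a) = 1
      rw [Aff.one_cb, Aff.one_ck, zero_mul, add_zero]
      simp [mof]
    · show ofAdd (0 : ℤ) = 1
      simp
  map_mul' g1 g2 := by
    refine SemidirectProduct.ext ?_ ?_
    · rw [mul_left]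
      show mof ((g1 * g2).cb + (g1 * g2).ck * a)
          = mof (g1.cb + g1.ck * a) *
            (wreathShift (ZMod R) (ofAdd g1.ct) (mof (g2.cb + g2.ck * a)))
      rw [wreathShift_mof, ← mof_add]
      congr 1
      rw [Aff.mul_cb, Aff.mul_ck]
      ring
    · rw [mul_right]
      show ofAdd ((g1 * g2).ct) = ofAdd g1.ct * ofAdd g2.ct
      rw [Aff.mul_ct, ofAdd_add]

/-- Generators for the affine model of the verbal map. -/
def gens (f : Fin n → WreathZModZ R) : Fin n → Aff R := fun i =>
  if i = 0 then ⟨0, 1, 0⟩ else ⟨AddMonoidAlgebra.ofCoeff (toAdd (f i).left), 0, toAdd (f i).right⟩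

lemma ev_gens (f : Fin n → WreathZModZ R) (a : LP R) (i : Fin n) :
    ev R a (gens f i) = Function.update f 0 (inl (mof a)) i := by
  rcases eq_or_ne i 0 with rfl | h
  · rw [Function.update_self]
    refine SemidirectProduct.ext ?_ ?_
    · show mof ((gens f 0).cb + (gens f 0).ck * a) = (inl (mof a) : WreathZModZ R).left
      rw [left_inl]
      simp only [gens, if_pos rfl]
      show mof (0 + 1 * a) = mof a
      rw [zero_add, one_mul]
    · show ofAdd ((gens f 0).ct) = (inl (mof a) : WreathZModZ R).right
      rw [right_inl]
      simp [gens]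
  · rw [Function.update_of_ne h]
    refine SemidirectProduct.ext ?_ ?_
    · show mof ((gens f i).cb + (gens f i).ck * a) = (f i).left
      simp only [gens, if_neg h]
      show mof (AddMonoidAlgebra.ofCoeff (toAdd (f i).left) + 0 * a) = (f i).left
      rw [zero_mul, add_zero]
      rfl
    · show ofAdd ((gens f i).ct) = (f i).right
      simp only [gens, if_neg h]
      rfl

lemma verbal_eq (w : FreeGroup (Fin n)) (f : Fin n → WreathZModZ R) (a : LP R) :
    verbalMap w f (inl (mof a)) =
      ⟨mof ((FreeGroup.lift (gens f) w).cb + (FreeGroup.lift (gens f) w).ck * a),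
        ofAdd (FreeGroup.lift (gens f) w).ct⟩ := by
  show FreeGroup.lift (Function.update f 0 (inl (mof a))) w = _
  have h1 : Function.update f 0 (inl (mof a)) = fun i => ev R a (gens f i) :=
    funext fun i => (ev_gens f a i).symm
  rw [h1, ← lift_comp (ev R a) (gens f) w]
  rfl

/-- Projection to the `ℤ`-component, as a homomorphism. -/
def piT (R : ℕ) : Aff R →* Multiplicative ℤ where
  toFun g := ofAdd g.ct
  map_one' := rfl
  map_mul' a b := by
    show ofAdd ((a * b).ct) = ofAdd a.ct * ofAdd b.ct
    rw [Aff.mul_ct, ofAdd_add]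

lemma ct_eq_zero {w : FreeGroup (Fin n)}
    (hstar : ∀ g : Fin n → Multiplicative ℤ, FreeGroup.lift g w = 1)
    (f : Fin n → WreathZModZ R) : (FreeGroup.lift (gens f) w).ct = 0 := by
  have h1 : piT R (FreeGroup.lift (gens f) w) = 1 := by
    rw [lift_comp (piT R) (gens f) w]; exact hstar _
  simpa [piT] using congrArg toAdd h1

/-- The augmentation map. -/
def aug (R : ℕ) : LP R →ₐ[ZMod R] ZMod R := AddMonoidAlgebra.lift (ZMod R) (ZMod R) ℤ 1

lemma aug_single (R : ℕ) (a : ℤ) (b : ZMod R) : aug R (AddMonoidAlgebra.single a b) = b := by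
  rw [aug, AddMonoidAlgebra.lift_single]
  simp

lemma aug_TT (t : ℤ) : aug R (TT R t) = 1 := aug_single R t 1

/-- The augmentation of the `ck`-component, as a homomorphism. -/
def chi (R : ℕ) : Aff R →* Multiplicative (ZMod R) where
  toFun g := ofAdd (aug R g.ck)
  map_one' := by
    show ofAdd (aug R (0 : LP R)) = 1
    simp
  map_mul' a b := by
    show ofAdd (aug R ((a * b).ck)) = ofAdd (aug R a.ck) * ofAdd (aug R b.ck)
    rw [Aff.mul_ck, ← ofAdd_add]
    congr 1
    rw [map_add, map_mul, aug_TT, one_mul]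

lemma aug_ck_eq_zero {w : FreeGroup (Fin n)}
    (hstar : ∀ g : Fin n → Multiplicative ℤ, FreeGroup.lift g w = 1)
    (f : Fin n → WreathZModZ R) : aug R (FreeGroup.lift (gens f) w).ck = 0 := by
  classical
  set j : Multiplicative ℤ →* Multiplicative (ZMod R) :=
    AddMonoidHom.toMultiplicative (Int.castAddHom (ZMod R)) with hj
  have hcomp : (fun i => chi R (gens f i)) =
      fun i => j (Function.update (1 : Fin n → Multiplicative ℤ) 0 (ofAdd (1 : ℤ)) i) := by
    funext i
    rcases eq_or_ne i 0 with rfl | h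
    · rw [Function.update_self]
      show ofAdd (aug R (gens f 0).ck) = j (ofAdd (1 : ℤ))
      simp only [gens, if_pos rfl]
      show ofAdd (aug R (1 : LP R)) = j (ofAdd (1 : ℤ))
      rw [map_one]
      simp [hj, AddMonoidHom.toMultiplicative]
    · rw [Function.update_of_ne h]
      show ofAdd (aug R (gens f i).ck) = j 1
      simp only [gens, if_neg h]
      show ofAdd (aug R (0 : LP R)) = j 1
      rw [map_zero, map_one, ofAdd_zero]
  have h1 : chi R (FreeGroup.lift (gens f) w) = 1 := by
    rw [lift_comp (chi R) (gens f) w, hcomp, ← lift_comp j _ w, hstar, map_one]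
  simpa [chi] using congrArg toAdd h1

end Affine

/-! ### Part III : reduction mod p and the key algebraic fact -/

section ModP

variable {R : ℕ}

/-- Monomials as a monoid homomorphism. -/
def Tmon (p : ℕ) : Multiplicative ℤ →* LP p where
  toFun t := AddMonoidAlgebra.single (toAdd t) 1
  map_one' := by
    show AddMonoidAlgebra.single (0 : ℤ) (1 : ZMod p) = 1
    rw [AddMonoidAlgebra.one_def]
  map_mul' a b := by
    show AddMonoidAlgebra.single (toAdd a + toAdd b) (1 : ZMod p) = _
    rw [AddMonoidAlgebra.single_mul_single, one_mul]

/-- Reduction of coefficients modulo `p`. -/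
def piP (p : ℕ) (h : p ∣ R) : LP R →+* LP p :=
  AddMonoidAlgebra.liftNCRingHom
    ((AddMonoidAlgebra.singleZeroRingHom).comp (ZMod.castHom h (ZMod p)))
    (Tmon p) (fun _ _ => Commute.all _ _)

lemma piP_single (p : ℕ) (h : p ∣ R) (a : ℤ) (b : ZMod R) :
    piP p h (AddMonoidAlgebra.single a b) =
      AddMonoidAlgebra.single a (ZMod.castHom h (ZMod p) b) := by
  show AddMonoidAlgebra.liftNC _ _ (AddMonoidAlgebra.single a b) = _
  rw [AddMonoidAlgebra.liftNC_single]
  show AddMonoidAlgebra.single 0 (ZMod.castHom h (ZMod p) b) *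
      AddMonoidAlgebra.single a (1 : ZMod p) = _
  rw [AddMonoidAlgebra.single_mul_single, zero_add, mul_one]

lemma piP_apply (p : ℕ) (h : p ∣ R) (x : LP R) :
    (piP p h x).coeff = Finsupp.mapRange (ZMod.castHom h (ZMod p)) (map_zero _) x.coeff := by
  induction x using AddMonoidAlgebra.induction with
  | zero => simp
  | single_add a b f ha hb ih =>
      rw [map_add, piP_single, AddMonoidAlgebra.coeff_add, ih, AddMonoidAlgebra.coeff_add,
        Finsupp.mapRange_add (fun x y => map_add (ZMod.castHom h (ZMod p)) x y),
        AddMonoidAlgebra.coeff_single, AddMonoidAlgebra.coeff_single,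
        Finsupp.mapRange_single]

lemma aug_piP (p : ℕ) (h : p ∣ R) (x : LP R) :
    aug p (piP p h x) = ZMod.castHom h (ZMod p) (aug R x) := by
  induction x using AddMonoidAlgebra.induction with
  | zero => simp
  | single_add a b f ha hb ih =>
      rw [map_add, map_add, piP_single, ih, map_add,
        show aug R (AddMonoidAlgebra.single a b) = b from aug_single R a b,
        show aug p (AddMonoidAlgebra.single a (ZMod.castHom h (ZMod p) b)) =
          ZMod.castHom h (ZMod p) b from aug_single p a _, map_add]

lemma piP_surjective (p : ℕ) (h : p ∣ R) [NeZero p] :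
    Function.Surjective (piP (R := R) p h) := by
  intro y
  refine ⟨AddMonoidAlgebra.ofCoeff
    (Finsupp.mapRange (fun t : ZMod p => ((t.val : ℕ) : ZMod R)) (by simp) y.coeff), ?_⟩
  apply AddMonoidAlgebra.coeff_injective
  rw [piP_apply, AddMonoidAlgebra.coeff_ofCoeff]
  ext i
  rw [Finsupp.mapRange_apply, Finsupp.mapRange_apply, map_natCast]
  exact ZMod.natCast_rightInverse (y.coeff i)

/-- The key algebraic fact: the affine dynamics condition forces the multiplier to vanish
mod every prime. -/
lemma q_eq_zero {p : ℕ} (hp : p.Prime) {q b : LP p}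
    (hq : aug p q = 0)
    (good : ∀ c : LP p, ∃ d, 1 ≤ d ∧
      q ^ d * c + (∑ j ∈ Finset.range d, q ^ j) * b = 0) :
    q = 0 := by
  haveI : Fact p.Prime := ⟨hp⟩
  haveI : NoZeroDivisors (LP p) := inferInstance
  by_cases hb : b = 0
  · obtain ⟨d, hd, h⟩ := good 1
    rw [hb, mul_one, mul_zero, add_zero] at h
    exact pow_eq_zero_iff (by omega : d ≠ 0) |>.mp h
  · exfalso
    obtain ⟨d, hd, h⟩ := good (q * b)
    have h2 : (q ^ (d + 1) + ∑ j ∈ Finset.range d, q ^ j) * b = 0 := by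
      rw [← h]; ring
    rcases mul_eq_zero.mp h2 with h3 | h3
    · have h4 := congrArg (aug p) h3
      have hsum : aug p (∑ j ∈ Finset.range d, q ^ j) = 1 := by
        rw [map_sum]
        rw [Finset.sum_congr rfl (fun j _ => by rw [map_pow, hq])]
        rw [Finset.sum_eq_single 0 (fun j _ hj => zero_pow hj)
          (fun hcon => absurd (Finset.mem_range.mpr (by omega)) hcon)]
        exact pow_zero 0
      rw [map_add, map_pow, hq, hsum, zero_pow (by omega : d + 1 ≠ 0), zero_add, map_zero] at h4
      exact one_ne_zero h4
    · exact hb h3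

/-- Coefficientwise divisibility by all primes of `R` forces nilpotency of exponent `k`. -/
lemma Q_pow_eq_zero (hR : 2 ≤ R) (Q : LP R)
    (h : ∀ (p : ℕ) (hp : p.Prime) (hd : p ∣ R), piP p hd Q = 0) :
    Q ^ (R.primeFactors.sup fun p => R.factorization p) = 0 := by
  classical
  haveI : NeZero R := ⟨by omega⟩
  set k := R.primeFactors.sup fun p => R.factorization p with hk
  set m := ∏ p ∈ R.primeFactors, p with hm
  have hcoef : ∀ i : ℤ, ∃ c : ZMod R, Q.coeff i = (m : ZMod R) * c := by
    intro i
    have hv : m ∣ (Q.coeff i).val := by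
      refine Finset.prod_primes_dvd _
        (fun p hp => (Nat.prime_of_mem_primeFactors hp).prime) ?_
      intro p hp
      have hpp := Nat.prime_of_mem_primeFactors hp
      have hpd := Nat.dvd_of_mem_primeFactors hp
      haveI : NeZero p := ⟨hpp.pos.ne'⟩
      have h0 := congrArg AddMonoidAlgebra.coeff (h p hpp hpd)
      rw [piP_apply, AddMonoidAlgebra.coeff_zero] at h0
      have h1 : ZMod.castHom hpd (ZMod p) (Q.coeff i) = 0 := by
        have h2 := Finsupp.ext_iff.mp h0 i
        rwa [Finsupp.mapRange_apply] at h2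
      rw [ZMod.castHom_apply, ← ZMod.natCast_val] at h1
      exact (ZMod.natCast_eq_zero_iff _ _).mp h1
    obtain ⟨c, hc⟩ := hv
    refine ⟨(c : ZMod R), ?_⟩
    have h3 : (Q.coeff i) = ((Q.coeff i).val : ZMod R) :=
      (ZMod.natCast_rightInverse _).symm
    rw [h3, hc]
    push_cast
    ring
  choose c hc using hcoef
  have hQ' : ∃ Q' : LP R, Q = AddMonoidAlgebra.single (0 : ℤ) ((m : ℕ) : ZMod R) * Q' := by
    refine ⟨AddMonoidAlgebra.ofCoeff ⟨Q.coeff.support,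
      fun i => if Q.coeff i = 0 then 0 else c i, ?_⟩, ?_⟩
    · intro a
      constructor
      · intro haa
        have hne : Q.coeff a ≠ 0 := Finsupp.mem_support_iff.mp haa
        show ¬ (if Q.coeff a = 0 then 0 else c a) = 0
        rw [if_neg hne]
        intro hca
        exact hne (by rw [hc a, hca, mul_zero])
      · intro hne
        replace hne : ¬ (if Q.coeff a = 0 then 0 else c a) = 0 := hne
        by_cases h0 : Q.coeff a = 0
        · rw [if_pos h0] at hne; exact absurd rfl hne
        · exact Finsupp.mem_support_iff.mpr h0
    · apply AddMonoidAlgebra.coeff_injective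
      ext i
      rw [AddMonoidAlgebra.coeff_single_zero_mul]
      show Q.coeff i = _ * (if Q.coeff i = 0 then 0 else c i)
      by_cases h0 : Q.coeff i = 0
      · rw [if_pos h0, mul_zero, h0]
      · rw [if_neg h0]; exact hc i
  obtain ⟨Q', hQQM⟩ := hQ'
  have hfact : R = ∏ p ∈ R.primeFactors, p ^ (R.factorization p) := by
    conv_lhs => rw [← Nat.factorization_prod_pow_eq_self (show R ≠ 0 by omega)]
    rfl
  have hdvd : R ∣ m ^ k := by
    conv_lhs => rw [hfact]
    rw [hm, ← Finset.prod_pow]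
    exact Finset.prod_dvd_prod_of_dvd _ _ (fun p hp => pow_dvd_pow p (Finset.le_sup hp))
  have hmk : (((m : ℕ) : ZMod R)) ^ k = 0 := by
    rw [← Nat.cast_pow]
    exact (ZMod.natCast_eq_zero_iff _ _).mpr hdvd
  rw [hQQM, mul_pow, AddMonoidAlgebra.single_pow, hmk, smul_zero]
  rw [show AddMonoidAlgebra.single (0 : ℤ) (0 : ZMod R) = 0 from AddMonoidAlgebra.single_zero 0, zero_mul]

end ModP

end WreathDepthProof

/-- The iterational depth of `(ℤ/Rℤ) ≀ ℤ` is at most `k + 1`, where `k` is the largest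
exponent in the prime factorization of `R`. -/
theorem wreathZModZ_depth_le (R : ℕ) (hR : 2 ≤ R) :
    ∀ (n : ℕ) [NeZero n] (w : FreeGroup (Fin n)),
      IsEIteratedIdentity w (WreathZModZ R) →
        DepthAtMost w (WreathZModZ R)
          (R.primeFactors.sup (fun p => R.factorization p) + 1) := by
  intro n _ w Hw f
  classical
  open WreathDepthProof SemidirectProduct Multiplicative in
  set k := R.primeFactors.sup fun p => R.factorization p with hk
  have hstar := WreathDepthProof.lift_int_eq_one Hw
  set B : WreathDepthProof.LP R := (FreeGroup.lift (WreathDepthProof.gens f) w).cb with hB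
  set Q : WreathDepthProof.LP R := (FreeGroup.lift (WreathDepthProof.gens f) w).ck with hQ
  have hct : (FreeGroup.lift (WreathDepthProof.gens f) w).ct = 0 :=
    WreathDepthProof.ct_eq_zero hstar f
  have haug : WreathDepthProof.aug R Q = 0 := WreathDepthProof.aug_ck_eq_zero hstar f
  have hkey : ∀ a : WreathDepthProof.LP R,
      verbalMap w f (inl (WreathDepthProof.mof a)) = inl (WreathDepthProof.mof (B + Q * a)) := by
    intro a
    rw [WreathDepthProof.verbal_eq w f a, hct]
    refine SemidirectProduct.ext ?_ ?_
    · rw [left_inl]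
    · rw [right_inl, ofAdd_zero]
  have hiter : ∀ (m : ℕ) (a : WreathDepthProof.LP R),
      (verbalMap w f)^[m] (inl (WreathDepthProof.mof a)) =
        inl (WreathDepthProof.mof (Q ^ m * a + (∑ j ∈ Finset.range m, Q ^ j) * B)) := by
    intro m
    induction m with
    | zero =>
        intro a
        rw [Function.iterate_zero_apply]
        congr 1
        congr 1
        rw [pow_zero, one_mul, Finset.range_zero, Finset.sum_empty, zero_mul, add_zero]
    | succ m ih =>
        intro a
        rw [Function.iterate_succ_apply', ih, hkey]
        congr 1
        congr 1
        rw [geom_sum_succ]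
        ring
  have hgood : ∀ c : WreathDepthProof.LP R, ∃ d, 1 ≤ d ∧
      Q ^ d * c + (∑ j ∈ Finset.range d, Q ^ j) * B = 0 := by
    intro c
    obtain ⟨d, hd1, hd⟩ := Hw (Function.update f 0 (inl (WreathDepthProof.mof c)))
    refine ⟨d, hd1, ?_⟩
    have hvm : verbalMap w (Function.update f 0 (inl (WreathDepthProof.mof c))) =
        verbalMap w f := by
      funext x
      show FreeGroup.lift
        (Function.update (Function.update f 0 (inl (WreathDepthProof.mof c))) 0 x) w = _
      rw [Function.update_idem]
      rfl
    rw [hvm, Function.update_self, hiter d c] at hd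
    have h1 : WreathDepthProof.mof (Q ^ d * c + (∑ j ∈ Finset.range d, Q ^ j) * B) = 1 :=
      inl_injective (by rw [hd, map_one])
    have h2 := congrArg toAdd h1
    rw [← AddMonoidAlgebra.coeff_eq_zero]
    exact h2
  have hQp : ∀ (p : ℕ) (hp : p.Prime) (hd : p ∣ R), WreathDepthProof.piP p hd Q = 0 := by
    intro p hp hdvd
    haveI : Fact p.Prime := ⟨hp⟩
    haveI : NeZero p := ⟨hp.pos.ne'⟩
    refine WreathDepthProof.q_eq_zero hp (b := WreathDepthProof.piP p hdvd B) ?_ ?_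
    · rw [WreathDepthProof.aug_piP, haug, map_zero]
    · intro c'
      obtain ⟨c, rfl⟩ := WreathDepthProof.piP_surjective p hdvd c'
      obtain ⟨d, hd1, hd0⟩ := hgood c
      refine ⟨d, hd1, ?_⟩
      have h3 := congrArg (WreathDepthProof.piP p hdvd) hd0
      rw [map_zero] at h3
      rw [← h3]
      rw [map_add, map_mul, map_mul, map_pow, map_sum]
      congr 2
      exact Finset.sum_congr rfl fun j _ => by rw [map_pow]
  have hQk : Q ^ k = 0 := WreathDepthProof.Q_pow_eq_zero hR Q hQp
  have hW : verbalMap w f (f 0) = FreeGroup.lift f w := by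
    show FreeGroup.lift (Function.update f 0 (f 0)) w = _
    rw [Function.update_eq_self]
  set a1 : WreathDepthProof.LP R := AddMonoidAlgebra.ofCoeff (toAdd (FreeGroup.lift f w).left) with ha1
  have hW' : FreeGroup.lift f w = inl (WreathDepthProof.mof a1) := by
    have hr : (FreeGroup.lift f w).right = 1 := by
      have h1 : rightHom (FreeGroup.lift f w) = 1 := by
        rw [WreathDepthProof.lift_comp rightHom f w]
        exact hstar _
      rwa [show (rightHom (FreeGroup.lift f w) : Multiplicative ℤ) =
        (FreeGroup.lift f w).right from rfl] at h1
    refine SemidirectProduct.ext ?_ ?_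
    · rw [left_inl]; rfl
    · rw [right_inl, hr]
  obtain ⟨d0, hd01, hd0⟩ := hgood a1
  rcases le_or_gt d0 k with hle | hgt
  · refine ⟨d0 + 1, by omega, by omega, ?_⟩
    rw [Function.iterate_succ_apply, hW, hW', hiter d0 a1, hd0]
    rw [show WreathDepthProof.mof (0 : WreathDepthProof.LP R) = 1 by simp [WreathDepthProof.mof], map_one]
  · refine ⟨k + 1, by omega, by omega, ?_⟩
    rw [Function.iterate_succ_apply, hW, hW', hiter k a1]
    have hQd0 : Q ^ d0 = 0 := by
      obtain ⟨e, rfl⟩ : ∃ e, d0 = k + e := ⟨d0 - k, by omega⟩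
      rw [pow_add, hQk, zero_mul]
    have hsum : (∑ j ∈ Finset.range d0, Q ^ j) = ∑ j ∈ Finset.range k, Q ^ j := by
      rw [Finset.range_eq_Ico,
        ← Finset.sum_Ico_consecutive _ (Nat.zero_le k) (le_of_lt hgt)]
      have hz : ∑ j ∈ Finset.Ico k d0, Q ^ j = 0 := by
        refine Finset.sum_eq_zero fun j hj => ?_
        obtain ⟨e, rfl⟩ : ∃ e, j = k + e := ⟨j - k, by
          have := (Finset.mem_Ico.mp hj).1; omega⟩
        rw [pow_add, hQk, zero_mul]
      rw [hz, add_zero, Finset.range_eq_Ico]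
    have hzero : Q ^ k * a1 + (∑ j ∈ Finset.range k, Q ^ j) * B = 0 := by
      rw [hQk, zero_mul, zero_add, ← hsum]
      rw [hQd0, zero_mul, zero_add] at hd0
      exact hd0
    rw [hzero]
    rw [show WreathDepthProof.mof (0 : WreathDepthProof.LP R) = 1 by simp [WreathDepthProof.mof], map_one]
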